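/- Let 0 < p < 1, q = 1 - p, and x² = x/(2√(pq)) for x ∈ ℝ. Define Q_j(x) = (q/p)^{j/2}·[ (2(p₀ - p)/p₀)·T_j(x*) + ((2p - p₀)/p₀)·U_j(x*) - (r₀/p₀)·√(p/q)·U_{j-1}(x*) ], where T_j, U_j are Chebyshev polynomials of the first and second kind (with U_{-1} = 0), and p₀ > 0, r₀ ≥ 0. Then Q_0(x) = 1 and the polynomials satisfy the three-term recurrence r₀·Q_0(x) + p₀·Q_1(x) = x·Q_0(x) and q·Q_{j-1}(x) + p·Q_{j+1}(x) = x·Q_j(x) for all j ≥ 1. -/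

import Mathlib

open Polynomial

/-- The eigenfunctions of the tridiagonal transition matrix, expressed in terms of
Chebyshev polynomials of the first and second kind. -/
noncomputable def kmQ (p q p₀ r₀ : ℝ) (j : ℤ) (x : ℝ) : ℝ :=
  (q / p) ^ ((j : ℝ) / 2) *
    ((2 * (p₀ - p) / p₀) * (Polynomial.Chebyshev.T ℝ j).eval (x / (2 * Real.sqrt (p * q))) +
     ((2 * p - p₀) / p₀) * (Polynomial.Chebyshev.U ℝ j).eval (x / (2 * Real.sqrt (p * q))) -
     (r₀ / p₀) * Real.sqrt (p / q) *
       (Polynomial.Chebyshev.U ℝ (j - 1)).eval (x / (2 * Real.sqrt (p * q))))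

theorem stmt_12 (p q p₀ r₀ : ℝ) (hp : 0 < p) (hp1 : p < 1) (hq : q = 1 - p)
    (hp₀ : 0 < p₀) (hr₀ : 0 ≤ r₀) :
    (∀ x : ℝ, kmQ p q p₀ r₀ 0 x = 1) ∧
    (∀ x : ℝ, r₀ * kmQ p q p₀ r₀ 0 x + p₀ * kmQ p q p₀ r₀ 1 x = x * kmQ p q p₀ r₀ 0 x) ∧
    (∀ j : ℤ, 1 ≤ j → ∀ x : ℝ,
      q * kmQ p q p₀ r₀ (j - 1) x + p * kmQ p q p₀ r₀ (j + 1) x = x * kmQ p q p₀ r₀ j x) := by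
  have hq0 : 0 < q := by rw [hq]; linarith
  have hs : 0 < Real.sqrt (p * q) := Real.sqrt_pos.mpr (by positivity)
  set s := Real.sqrt (p * q) with hs_def
  have hc : (0:ℝ) < q / p := by positivity
  set r := Real.sqrt (q / p) with hr_def
  have hr : 0 < r := Real.sqrt_pos.mpr hc
  have hpr : p * r = s := by
    rw [hr_def, hs_def, ← Real.sqrt_sq hp.le, ← Real.sqrt_mul (by positivity)]
    congr 1; field_simp; rw [Real.sq_sqrt (sq_nonneg _)]
  have hqsr : q = s * r := by
    rw [hr_def, hs_def, ← Real.sqrt_mul (by positivity), ← Real.sqrt_sq hq0.le]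
    congr 1; field_simp; rw [Real.sq_sqrt (sq_nonneg _)]
  have hpq1 : Real.sqrt (p / q) * r = 1 := by
    rw [hr_def, ← Real.sqrt_mul (by positivity), show p / q * (q / p) = 1 by field_simp,
      Real.sqrt_one]
  have hinv : (p₀)⁻¹ * p₀ = 1 := inv_mul_cancel₀ hp₀.ne'
  refine ⟨?_, ?_, ?_⟩
  · intro x
    simp only [kmQ, Int.cast_zero, zero_div, Real.rpow_zero, Chebyshev.T_zero, Chebyshev.U_zero,
      show (0:ℤ) - 1 = -1 by ring, Chebyshev.U_neg_one, eval_one, eval_zero]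
    field_simp
    ring
  · intro x
    simp only [kmQ, Int.cast_zero, Int.cast_one, zero_div, Real.rpow_zero, Chebyshev.T_zero,
      Chebyshev.T_one, Chebyshev.U_zero, Chebyshev.U_one,
      show (0:ℤ) - 1 = -1 by ring, show (1:ℤ) - 1 = 0 by ring, Chebyshev.U_neg_one,
      eval_one, eval_zero, eval_X, eval_mul, eval_ofNat, ← hs_def]
    have h1 : (q / p) ^ ((1:ℝ) / 2) = r := by
      rw [hr_def, Real.sqrt_eq_rpow]
    rw [h1]
    set y := x / (2 * s) with hy_def
    have hx : x = 2 * s * y := by rw [hy_def]; field_simp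
    rw [hx]
    linear_combination (2*y) * hpr - r₀ * hpq1 +
      (r₀ + 2*p*r*y - r₀ * Real.sqrt (p/q) * r - 2*s*y) * hinv
  · intro j hj x
    set y := x / (2 * s) with hy_def
    have hx : x = 2 * s * y := by rw [hy_def]; field_simp
    simp only [kmQ, ← hy_def, ← hs_def]
    have hqc : q * (q / p) ^ (((j - 1 : ℤ) : ℝ) / 2) = s * (q / p) ^ ((j : ℝ) / 2) := by
      rw [show ((j - 1 : ℤ) : ℝ) = (j:ℝ) - 1 by push_cast; ring,
        show ((j:ℝ) - 1) / 2 = (j:ℝ)/2 - 1/2 by ring, Real.rpow_sub hc,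
        ← Real.sqrt_eq_rpow, ← hr_def, hqsr]
      field_simp
    have hpc : p * (q / p) ^ (((j + 1 : ℤ) : ℝ) / 2) = s * (q / p) ^ ((j : ℝ) / 2) := by
      rw [show ((j + 1 : ℤ) : ℝ) = (j:ℝ) + 1 by push_cast; ring,
        show ((j:ℝ) + 1) / 2 = (j:ℝ)/2 + 1/2 by ring, Real.rpow_add hc,
        ← Real.sqrt_eq_rpow, ← hr_def, ← hpr]
      ring
    have hT : (Chebyshev.T ℝ (j + 1)).eval y
        = 2 * y * (Chebyshev.T ℝ j).eval y - (Chebyshev.T ℝ (j - 1)).eval y := by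
      have h := Chebyshev.T_add_two ℝ (j - 1)
      rw [show j - 1 + 2 = j + 1 by ring, show j - 1 + 1 = j by ring] at h
      rw [h]; simp [eval_mul]
    have hU : (Chebyshev.U ℝ (j + 1)).eval y
        = 2 * y * (Chebyshev.U ℝ j).eval y - (Chebyshev.U ℝ (j - 1)).eval y := by
      have h := Chebyshev.U_add_two ℝ (j - 1)
      rw [show j - 1 + 2 = j + 1 by ring, show j - 1 + 1 = j by ring] at h
      rw [h]; simp [eval_mul]
    have hU' : (Chebyshev.U ℝ j).eval y
        = 2 * y * (Chebyshev.U ℝ (j - 1)).eval y - (Chebyshev.U ℝ (j - 1 - 1)).eval y := by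
      have h := Chebyshev.U_add_two ℝ (j - 2)
      rw [show j - 2 + 2 = j by ring, show j - 2 + 1 = j - 1 by ring,
        show j - 2 = j - 1 - 1 by ring] at h
      rw [h]; simp [eval_mul]
    rw [show j + 1 - 1 = j by ring, hT, hU, hU', hx]
    set Tm := (Chebyshev.T ℝ (j - 1)).eval y
    set Tj := (Chebyshev.T ℝ j).eval y
    set Um := (Chebyshev.U ℝ (j - 1)).eval y
    set Um2 := (Chebyshev.U ℝ (j - 1 - 1)).eval y
    linear_combination
      (2 * (p₀ - p) / p₀ * Tm + (2 * p - p₀) / p₀ * Um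
        - r₀ / p₀ * Real.sqrt (p / q) * Um2) * hqc
      + (2 * (p₀ - p) / p₀ * (2 * y * Tj - Tm)
        + (2 * p - p₀) / p₀ * (2 * y * (2 * y * Um - Um2) - Um)
        - r₀ / p₀ * Real.sqrt (p / q) * (2 * y * Um - Um2)) * hpc
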